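/- Let μ_t = (1/(1+t)) δ_{−t} + (t/(1+t)) δ_{1−t} for t > 0. Then (μ_t)_{t>0} is non-decreasing in the WDS order, but the translated family (μ̂_t)_{t>0}, where μ̂_t is the image of μ_t under y ↦ y − 1, is not non-decreasing in the WDS order. Hence WDS ordering is not preserved by deterministic translations. -/

import Mathlib

open MeasureTheory Set Filter

noncomputable def meanM (μ : Measure ℝ) : ℝ := ∫ y, y ∂μ

noncomputable def rSupE (μ : Measure ℝ) : EReal :=
  sInf ((fun z : ℝ => (z : EReal)) '' {z : ℝ | μ (Ici z) = 0})

noncomputable def psiWds (μ : Measure ℝ) (x : ℝ) : EReal :=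
  if (x : EReal) < rSupE μ then
    ((((∫ y in Ici x, y ∂μ) - meanM μ) / (μ (Ici x)).toReal : ℝ) : EReal)
  else ⊤

noncomputable def Kfun (μ : Measure ℝ) (x : ℝ) : ℝ :=
  (∫ y in Ici x, (y - x) ∂μ) - meanM μ

noncomputable def muT (t : ℝ) : Measure ℝ :=
  ENNReal.ofReal (1 / (1 + t)) • Measure.dirac (-t)
    + ENNReal.ofReal (t / (1 + t)) • Measure.dirac (1 - t)

section twoPoint
variable (a b c₁ c₂ : ℝ)

noncomputable def nu2 : Measure ℝ :=
  ENNReal.ofReal c₁ • Measure.dirac a + ENNReal.ofReal c₂ • Measure.dirac b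

lemma integrable_csmul_dirac (f : ℝ → ℝ) (c : ℝ) (p : ℝ) :
    Integrable f (ENNReal.ofReal c • Measure.dirac p) := by
  have h : Integrable f (Measure.dirac p) :=
    (integrable_const (f p)).congr (ae_eq_dirac f).symm
  rcases eq_or_ne (ENNReal.ofReal c) 0 with h0 | h0
  · rw [h0]; simp [Integrable, HasFiniteIntegral]
  · exact (integrable_smul_measure h0 ENNReal.ofReal_ne_top).mpr h

lemma nu2_Ici (x : ℝ) :
    nu2 a b c₁ c₂ (Ici x) =
      (if x ≤ a then ENNReal.ofReal c₁ else 0) + (if x ≤ b then ENNReal.ofReal c₂ else 0) := by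
  simp [nu2, Measure.dirac_apply' _ measurableSet_Ici, indicator_apply, mem_Ici]

lemma nu2_mean (hc₁ : 0 ≤ c₁) (hc₂ : 0 ≤ c₂) :
    meanM (nu2 a b c₁ c₂) = c₁ * a + c₂ * b := by
  rw [meanM, nu2, integral_add_measure (integrable_csmul_dirac _ _ _)
    (integrable_csmul_dirac _ _ _), integral_smul_measure, integral_smul_measure,
    integral_dirac, integral_dirac, ENNReal.toReal_ofReal hc₁, ENNReal.toReal_ofReal hc₂, smul_eq_mul, smul_eq_mul]

lemma nu2_setInt (hc₁ : 0 ≤ c₁) (hc₂ : 0 ≤ c₂) (x : ℝ) :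
    (∫ y in Ici x, y ∂(nu2 a b c₁ c₂)) =
      (if x ≤ a then c₁ * a else 0) + (if x ≤ b then c₂ * b else 0) := by
  rw [nu2, Measure.restrict_add,
    integral_add_measure ((integrable_csmul_dirac _ _ _).integrableOn)
      ((integrable_csmul_dirac _ _ _).integrableOn),
    Measure.restrict_smul, Measure.restrict_smul,
    integral_smul_measure, integral_smul_measure, setIntegral_dirac, setIntegral_dirac,
    ENNReal.toReal_ofReal hc₁, ENNReal.toReal_ofReal hc₂]
  simp only [indicator_apply, mem_Ici, smul_eq_mul]
  by_cases h1 : x ≤ a <;> by_cases h2 : x ≤ b <;> simp [h1, h2]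

lemma nu2_rSup (hc₂ : 0 < c₂) (hab : a < b) :
    rSupE (nu2 a b c₁ c₂) = (b : EReal) := by
  have hset : {z : ℝ | nu2 a b c₁ c₂ (Ici z) = 0} = Ioi b := by
    ext z
    rw [mem_setOf_eq, nu2_Ici]
    constructor
    · intro h
      by_contra hz
      rw [mem_Ioi] at hz; push_neg at hz
      simp [hz, ENNReal.ofReal_eq_zero, not_lt.mpr hc₂.le] at h
      exact absurd h.2 (by linarith)
    · intro hz
      rw [mem_Ioi] at hz
      have h1 : ¬ z ≤ a := by linarith
      have h2 : ¬ z ≤ b := by linarith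
      simp [h1, h2]
  have himg : (fun z : ℝ => (z : EReal)) '' Ioi b = Ioo (b : EReal) ⊤ := by
    ext w
    constructor
    · rintro ⟨z, hz, rfl⟩
      exact ⟨EReal.coe_lt_coe_iff.mpr hz, EReal.coe_lt_top z⟩
    · rintro ⟨h1, h2⟩
      lift w to ℝ using ⟨h2.ne, (lt_trans (EReal.bot_lt_coe b) h1).ne'⟩
      exact ⟨w, EReal.coe_lt_coe_iff.mp h1, rfl⟩
  rw [rSupE, hset, himg, csInf_Ioo (EReal.coe_lt_top b)]

lemma psi_nu2 (hc₁ : 0 < c₁) (hc₂ : 0 < c₂) (hab : a < b) (x : ℝ) :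
    psiWds (nu2 a b c₁ c₂) x =
      if x ≤ a then ((0:ℝ) : EReal)
      else if x < b then ((-(c₁ * a) / c₂ : ℝ) : EReal)
      else ⊤ := by
  rw [psiWds, nu2_rSup a b c₁ c₂ hc₂ hab, nu2_mean a b c₁ c₂ hc₁.le hc₂.le,
    nu2_setInt a b c₁ c₂ hc₁.le hc₂.le, nu2_Ici]
  by_cases hxa : x ≤ a
  · have hxb : x ≤ b := le_of_lt (lt_of_le_of_lt hxa hab)
    have hlt : (x : EReal) < (b : EReal) := EReal.coe_lt_coe_iff.mpr (lt_of_le_of_lt hxa hab)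
    simp [hxa, hxb, hlt, not_lt.mpr hxa]
  · by_cases hxb : x < b
    · have hlt : (x : EReal) < (b : EReal) := EReal.coe_lt_coe_iff.mpr hxb
      simp only [hxa, hxb, hxb.le, hlt, if_true, if_false, zero_add]
      rw [ENNReal.toReal_ofReal hc₂.le]
      congr 1
      ring
    · have hlt : ¬ ((x : EReal) < (b : EReal)) := by
        simp [EReal.coe_lt_coe_iff]; exact not_lt.mp hxb
      simp [hxa, hxb, hlt]

end twoPoint

lemma muT_eq (t : ℝ) : muT t = nu2 (-t) (1 - t) (1 / (1 + t)) (t / (1 + t)) := rfl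

lemma psi_muT (t : ℝ) (ht : 0 < t) (x : ℝ) :
    psiWds (muT t) x =
      if x ≤ -t then ((0:ℝ) : EReal)
      else if x < 1 - t then ((1:ℝ) : EReal)
      else ⊤ := by
  have h1t : (0:ℝ) < 1 + t := by linarith
  rw [muT_eq, psi_nu2 _ _ _ _ (by positivity) (by positivity) (by linarith)]
  have : -((1 / (1 + t)) * (-t)) / (t / (1 + t)) = 1 := by
    field_simp
  rw [this]

lemma map_muT (t : ℝ) :
    Measure.map (fun y => y - 1) (muT t) = nu2 (-t - 1) (-t) (1 / (1 + t)) (t / (1 + t)) := by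
  have hm : Measurable (fun y : ℝ => y - 1) := measurable_id.sub_const 1
  rw [muT, Measure.map_add _ _ hm, Measure.map_smul, Measure.map_smul,
    Measure.map_dirac' hm, Measure.map_dirac' hm, nu2]
  norm_num

lemma psi_hat (t : ℝ) (ht : 0 < t) (x : ℝ) :
    psiWds (Measure.map (fun y => y - 1) (muT t)) x =
      if x ≤ -t - 1 then ((0:ℝ) : EReal)
      else if x < -t then (((1 + t) / t : ℝ) : EReal)
      else ⊤ := by
  have h1t : (0:ℝ) < 1 + t := by linarith
  rw [map_muT, psi_nu2 _ _ _ _ (by positivity) (by positivity) (by linarith)]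
  have : -((1 / (1 + t)) * (-t - 1)) / (t / (1 + t)) = (1 + t) / t := by
    field_simp
    ring
  rw [this]

theorem stmt19 :
    (∀ s t : ℝ, 0 < s → s ≤ t → ∀ x : ℝ, psiWds (muT s) x ≤ psiWds (muT t) x) ∧
    ¬ (∀ s t : ℝ, 0 < s → s ≤ t → ∀ x : ℝ,
        psiWds (Measure.map (fun y => y - 1) (muT s)) x ≤
          psiWds (Measure.map (fun y => y - 1) (muT t)) x) := by
  constructor
  · intro s t hs hst x
    have ht : 0 < t := lt_of_lt_of_le hs hst
    rw [psi_muT s hs, psi_muT t ht]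
    by_cases h1 : x ≤ -s
    · simp only [h1, if_true]
      by_cases h2 : x ≤ -t
      · simp [h2]
      · simp only [h2, if_false]
        by_cases h3 : x < 1 - t
        · simp [h3, EReal.coe_le_coe_iff]
        · simp [h3]
    · simp only [h1, if_false]
      have h2 : ¬ x ≤ -t := by intro h; exact h1 (h.trans (by linarith))
      simp only [h2, if_false]
      by_cases h3 : x < 1 - s
      · simp only [h3, if_true]
        by_cases h4 : x < 1 - t
        · simp [h4]
        · simp [h4]
      · have h4 : ¬ x < 1 - t := by intro h; exact h3 (h.trans_le (by linarith))
        simp [h3, h4]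
  · intro H
    have := H 1 (3/2) one_pos (by norm_num) (-7/4)
    rw [psi_hat 1 one_pos, psi_hat (3/2) (by norm_num)] at this
    norm_num at this
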